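/- arXiv:1202.6639 — 3 statements merged into one kernel-verified Lean document; each statement's English description precedes it below -/
import Mathlib

section
/- Let P(z) ∈ 𝒞₀^ω[z] be a monic polynomial of degree d ≥ 2 that is irreducible in 𝒞₀^ω[z], and let r > 0 and η analytic on 𝔻_r satisfy P_{w^d}(z) = ∏_{k=0}^{d−1} ( z − η(e^{2πik/d} w) ) for all w ∈ 𝔻_r. Write the Taylor expansion η(w) = Σ_{n=0}^∞ η_n w^n. Then there exists an integer L ≥ 1 such that η_L ≠ 0 and d does not divide L. -/
open Filter Metric Polynomial Complex

noncomputable section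

/-- The ring `𝒞₀^ω` of germs at `0` of complex-analytic functions, realized as a
subring of the ring of germs at `0` of complex-valued functions. -/
def analyticGermRing : Subring ((nhds (0:ℂ)).Germ ℂ) where
  carrier := {g | ∃ f : ℂ → ℂ, AnalyticAt ℂ f 0 ∧ g = Filter.Germ.ofFun f}
  mul_mem' := by
    rintro a b ⟨f, hf, rfl⟩ ⟨g, hg, rfl⟩
    exact ⟨f * g, hf.mul hg, rfl⟩
  one_mem' := ⟨1, analyticAt_const, rfl⟩
  add_mem' := by
    rintro a b ⟨f, hf, rfl⟩ ⟨g, hg, rfl⟩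
    exact ⟨f + g, hf.add hg, rfl⟩
  zero_mem' := ⟨0, analyticAt_const, rfl⟩
  neg_mem' := by
    rintro a ⟨f, hf, rfl⟩
    exact ⟨-f, hf.neg, rfl⟩

/-- The germ at `0` of a function analytic at `0`, as an element of `analyticGermRing`. -/
def germOf (f : ℂ → ℂ) (hf : AnalyticAt ℂ f 0) : analyticGermRing :=
  ⟨Filter.Germ.ofFun f, f, hf, rfl⟩

/-- The monic polynomial `z^d + a_{d-1}(w) z^{d-1} + ⋯ + a_0(w)` with coefficients
evaluated at `w`. -/
def polyEval (d : ℕ) (a : Fin d → ℂ → ℂ) (w : ℂ) : Polynomial ℂ :=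
  X ^ d + ∑ i : Fin d, C (a i w) * X ^ (i : ℕ)

/-- The monic polynomial `z^d + a_{d-1} z^{d-1} + ⋯ + a_0` over `𝒞₀^ω`. -/
def polyGerm (d : ℕ) (a : Fin d → ℂ → ℂ) (ha : ∀ i, AnalyticAt ℂ (a i) 0) :
    Polynomial analyticGermRing :=
  X ^ d + ∑ i : Fin d, C (germOf (a i) (ha i)) * X ^ (i : ℕ)

instance : Nontrivial analyticGermRing := by
  refine ⟨0, 1, fun h => ?_⟩
  have : ((0 : analyticGermRing) : (nhds (0:ℂ)).Germ ℂ) = 1 := by rw [h]; rfl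
  have h2 : ((0:ℂ) : (nhds (0:ℂ)).Germ ℂ) = ((1:ℂ) : (nhds (0:ℂ)).Germ ℂ) := this
  exact zero_ne_one (Filter.Germ.const_inj.mp h2)

instance : IsReduced ((nhds (0:ℂ)).Germ ℂ) := by
  constructor
  intro x hx
  obtain ⟨n, hn⟩ := hx
  induction x using Filter.Germ.inductionOn with
  | h f =>
    rcases Nat.eq_zero_or_pos n with rfl | hnp
    · rw [pow_zero] at hn
      exact absurd ((Filter.Germ.const_inj (l := nhds (0:ℂ))).mp hn.symm).symm one_ne_zero
    · have : (↑(f ^ n) : (nhds (0:ℂ)).Germ ℂ) = ↑(0 : ℂ → ℂ) := by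
        rw [Filter.Germ.coe_pow]; exact hn
      have hev : (f ^ n : ℂ → ℂ) =ᶠ[nhds (0:ℂ)] 0 := Filter.Germ.coe_eq.mp this
      have : f =ᶠ[nhds (0:ℂ)] 0 := by
        filter_upwards [hev] with v hv
        have : f v ^ n = 0 := hv
        exact pow_eq_zero_iff hnp.ne'  |>.mp this
      exact Filter.Germ.coe_eq.mpr this

instance : IsReduced analyticGermRing :=
  isReduced_of_injective analyticGermRing.subtype Subtype.coe_injective

/-- If `P` is monic of degree `d ≥ 2` and irreducible over `𝒞₀^ω`, and `η` analytic on
`𝔻_r` gives the Newton factorization `P_{w^d}(z) = ∏_{k<d} (z - η(e^{2πik/d} w))`, with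
Taylor expansion `η(w) = Σ_n c_n w^n`, then some Taylor coefficient `c_L` with `L ≥ 1`
and `d ∤ L` is nonzero. -/
theorem exists_taylor_coeff_not_divisible
    (d : ℕ) (hd : 2 ≤ d) (a : Fin d → ℂ → ℂ) (ha : ∀ i, AnalyticAt ℂ (a i) 0)
    (hirr : Irreducible (polyGerm d a ha))
    (r : ℝ) (hr : 0 < r) (η : ℂ → ℂ) (hη : AnalyticOnNhd ℂ η (ball 0 r))
    (hfac : ∀ w ∈ ball (0:ℂ) r,
      polyEval d a (w ^ d) =
        ∏ k ∈ Finset.range d,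
          (X - C (η (Complex.exp (2 * Real.pi * I * k / d) * w))))
    (c : ℕ → ℂ) (hc : ∀ w ∈ ball (0:ℂ) r, HasSum (fun n => c n * w ^ n) (η w)) :
    ∃ L : ℕ, 1 ≤ L ∧ c L ≠ 0 ∧ ¬ (d ∣ L) := by
  by_contra hcon
  push_neg at hcon
  have hd0 : (d:ℂ) ≠ 0 := Nat.cast_ne_zero.mpr (by omega)
  -- the unit-modulus factors
  have habs : ∀ k : ℕ, ‖Complex.exp (2 * Real.pi * I * k / d)‖ = 1 := by
    intro k
    have : 2 * Real.pi * I * k / d = ((2 * Real.pi * k / d : ℝ) : ℂ) * I := by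
      push_cast; ring
    rw [this, Complex.norm_exp_ofReal_mul_I]
  have hpow1 : ∀ k n : ℕ, d ∣ n → Complex.exp (2 * Real.pi * I * k / d) ^ n = 1 := by
    intro k n hdvd
    obtain ⟨m, rfl⟩ := hdvd
    rw [← Complex.exp_nat_mul]
    have : ((d * m : ℕ) : ℂ) * (2 * Real.pi * I * k / d) = ((k * m : ℕ) : ℂ) * (2 * Real.pi * I) := by
      push_cast; field_simp
    rw [this, Complex.exp_nat_mul_two_pi_mul_I]
  -- Step A : invariance of η under multiplication by roots of unity
  have hper : ∀ w ∈ ball (0:ℂ) r, ∀ k : ℕ,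
      η (Complex.exp (2 * Real.pi * I * k / d) * w) = η w := by
    intro w hw k
    have hmem : Complex.exp (2 * Real.pi * I * k / d) * w ∈ ball (0:ℂ) r := by
      rw [mem_ball_zero_iff] at hw ⊢
      rw [norm_mul, habs k, one_mul]
      exact hw
    have h1 := hc _ hmem
    have h2 := hc w hw
    have heqf : (fun n => c n * (Complex.exp (2 * Real.pi * I * k / d) * w) ^ n)
        = fun n => c n * w ^ n := by
      funext n
      by_cases hcn : c n = 0
      · simp [hcn]
      · rcases Nat.eq_zero_or_pos n with rfl | hn
        · simp
        · rw [mul_pow, hpow1 k n (hcon n hn hcn), one_mul]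
    rw [heqf] at h1
    exact h1.unique h2
  -- Step B : coefficient identity
  have lastlt : d - 1 < d := by omega
  have hcoeffB : ∀ w ∈ ball (0:ℂ) r, a ⟨d-1, lastlt⟩ (w^d) = -(d * η w) := by
    intro w hw
    have h := congrArg (fun p => Polynomial.coeff p (d-1)) (hfac w hw)
    have hL : (polyEval d a (w^d)).coeff (d-1) = a ⟨d-1, lastlt⟩ (w^d) := by
      rw [polyEval, coeff_add, coeff_X_pow, if_neg (by omega), zero_add, finset_sum_coeff]
      rw [Finset.sum_eq_single (⟨d-1, lastlt⟩ : Fin d)]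
      · rw [coeff_C_mul, coeff_X_pow, if_pos rfl, mul_one]
      · intro i _ hi
        rw [coeff_C_mul, coeff_X_pow, if_neg, mul_zero]
        intro hcontra
        exact hi (Fin.ext hcontra.symm)
      · intro hmem
        exact absurd (Finset.mem_univ _) hmem
    have hR : (∏ k ∈ Finset.range d,
        (X - C (η (Complex.exp (2 * Real.pi * I * k / d) * w)))).coeff (d-1) = -(d * η w) := by
      have := prod_X_sub_C_coeff_card_pred (Finset.range d)
        (fun k => η (Complex.exp (2 * Real.pi * I * k / d) * w))
        (by rw [Finset.card_range]; omega)
      rw [Finset.card_range] at this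
      rw [this]
      congr 1
      have : ∀ k ∈ Finset.range d, η (Complex.exp (2 * Real.pi * I * k / d) * w) = η w :=
        fun k _ => hper w hw k
      rw [Finset.sum_congr rfl this, Finset.sum_const, Finset.card_range, nsmul_eq_mul]
    rw [hL, hR] at h
    exact h
  -- the analytic candidate root
  set g : ℂ → ℂ := fun v => -(a ⟨d-1, lastlt⟩ v) * (d:ℂ)⁻¹ with hgdef
  have hg : AnalyticAt ℂ g 0 := ((ha _).neg).mul analyticAt_const
  have hgw : ∀ w ∈ ball (0:ℂ) r, g (w^d) = η w := by
    intro w hw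
    rw [hgdef]
    simp only
    rw [hcoeffB w hw]
    field_simp
  -- Step C : g v is a root of polyEval d a v for v near 0
  have hroot : ∀ v ∈ ball (0:ℂ) (r^d), Polynomial.eval (g v) (polyEval d a v) = 0 := by
    intro v hv
    obtain ⟨w, hwv⟩ : ∃ w : ℂ, w ^ d = v :=
      ⟨v ^ ((d:ℂ))⁻¹, Complex.cpow_nat_inv_pow v (by omega)⟩
    have hwball : w ∈ ball (0:ℂ) r := by
      rw [mem_ball_zero_iff] at hv ⊢
      have hpow : ‖w‖ ^ d < r ^ d := by rw [← norm_pow, hwv]; exact hv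
      exact lt_of_pow_lt_pow_left₀ d hr.le hpow
    subst hwv
    rw [hgw w hwball, hfac w hwball, eval_prod]
    apply Finset.prod_eq_zero (Finset.mem_range.mpr (by omega : 0 < d))
    simp [Complex.exp_zero]
  -- Step D : germ-level root
  have h0 : Polynomial.eval (germOf g hg) (polyGerm d a ha) = 0 := by
    apply Subtype.ext
    have step1 : analyticGermRing.subtype (Polynomial.eval (germOf g hg) (polyGerm d a ha))
        = Polynomial.eval₂ analyticGermRing.subtype
            (analyticGermRing.subtype (germOf g hg)) (polyGerm d a ha) :=
      (Polynomial.eval₂_hom _ _).symm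
    rw [show ((Polynomial.eval (germOf g hg) (polyGerm d a ha) : analyticGermRing)
        : (nhds (0:ℂ)).Germ ℂ)
        = analyticGermRing.subtype (Polynomial.eval (germOf g hg) (polyGerm d a ha)) from rfl,
      step1]
    have hsub : ∀ (f : ℂ → ℂ) (hf : AnalyticAt ℂ f 0),
        analyticGermRing.subtype (germOf f hf) = Filter.Germ.ofFun f := fun _ _ => rfl
    simp only [polyGerm, eval₂_add, eval₂_X_pow, eval₂_finset_sum, eval₂_mul, eval₂_C, hsub]
    have hΦ : (Filter.Germ.ofFun (g ^ d + ∑ i : Fin d, a i * g ^ (i:ℕ) : ℂ → ℂ)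
        : (nhds (0:ℂ)).Germ ℂ)
        = (Filter.Germ.ofFun g) ^ d
          + ∑ i : Fin d, Filter.Germ.ofFun (a i) * (Filter.Germ.ofFun g) ^ (i:ℕ) := by
      show Filter.Germ.coeRingHom (nhds (0:ℂ)) _ = _
      rw [map_add, map_pow, map_sum]
      simp only [map_mul, map_pow]
      rfl
    rw [← hΦ]
    have hfun : (g ^ d + ∑ i : Fin d, a i * g ^ (i:ℕ) : ℂ → ℂ)
        =ᶠ[nhds (0:ℂ)] (fun _ => (0:ℂ)) := by
      filter_upwards [ball_mem_nhds (0:ℂ) (pow_pos hr d)] with v hv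
      have h := hroot v hv
      simp only [polyEval, eval_add, eval_pow, eval_finset_sum, eval_mul, eval_C, eval_X] at h
      simpa [Finset.sum_apply] using h
    have : ((0 : analyticGermRing) : (nhds (0:ℂ)).Germ ℂ)
        = Filter.Germ.ofFun (fun _ => (0:ℂ)) := rfl
    rw [this]
    exact Filter.Germ.coe_eq.mpr hfun
  -- Step E : contradiction with irreducibility
  obtain ⟨q, heq⟩ := Polynomial.dvd_iff_isRoot.mpr h0
  have hdeg : (polyGerm d a ha).natDegree = d := by
    have hs : (∑ i : Fin d, C (germOf (a i) (ha i)) * X ^ (i:ℕ)).degree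
        < ((X : Polynomial analyticGermRing) ^ d).degree := by
      rw [degree_X_pow]
      refine lt_of_le_of_lt (degree_sum_le _ _) ?_
      rw [Finset.sup_lt_iff (by exact_mod_cast WithBot.bot_lt_coe d)]
      intro i _
      exact lt_of_le_of_lt (degree_C_mul_X_pow_le _ _) (by exact_mod_cast i.2)
    have hdeg' : (polyGerm d a ha).degree = d := by
      rw [polyGerm, degree_add_eq_left_of_degree_lt hs, degree_X_pow]
    exact natDegree_eq_of_degree_eq_some hdeg'
  rcases hirr.isUnit_or_isUnit heq with h1 | h2
  · exact Polynomial.not_isUnit_X_sub_C _ h1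
  · have hq0 : q.natDegree = 0 := by
      have hnil := (Polynomial.isUnit_iff_coeff_isUnit_isNilpotent.mp h2).2
      have hz : ∀ i, i ≠ 0 → q.coeff i = 0 := fun i hi => (hnil i hi).eq_zero
      exact Nat.le_zero.mp (Polynomial.natDegree_le_iff_coeff_eq_zero.mpr
        (fun N hN => hz N (by omega)))
    have : d ≤ 1 := by
      calc d = (polyGerm d a ha).natDegree := hdeg.symm
        _ = ((X - C (germOf g hg)) * q).natDegree := by rw [heq]
        _ ≤ (X - C (germOf g hg)).natDegree + q.natDegree := Polynomial.natDegree_mul_le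
        _ ≤ 1 := by rw [Polynomial.natDegree_X_sub_C, hq0]
    omega
end
end

section
/- Let d ≥ 2 and L ≥ 1 be integers with d not dividing L. Let λ be a complex-analytic function on a disc 𝔻_u (u > 0) with Taylor expansion λ(w) = Σ_{n=0}^∞ λ_n w^n, such that λ_0 = 0 and λ_m = 0 for every integer m with 1 ≤ m < L and d not dividing m. Let ω ∈ ℂ with |ω| = 1, let δ > 0, and let h : (−δ, δ) → ℝ be real-analytic with h(0) = 0 and h′(0) = 0. Suppose ζ : (−u′, u′) → ℝ (for some u′ ∈ (0, u]) satisfies ζ(t) = h( Re λ(ω t) ) for all t ∈ (−u′, u′). Then ζ is real-analytic near 0 and its L-th Taylor coefficient at 0 is zero. -/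
open Metric Complex Set

noncomputable section

/-- Key computation in the main theorem: if `λ` is analytic on `𝔻_u` with Taylor
coefficients `c`, `c 0 = 0`, and every coefficient `c m` with `1 ≤ m < L` and `d ∤ m`
vanishes, `|ω| = 1`, `h` is real-analytic near `0` with `h 0 = 0`, `h' 0 = 0`, and
`ζ t = h (Re λ(ω t))` near `0`, then `ζ` is real-analytic at `0` and its `L`-th Taylor
coefficient vanishes. -/
theorem zeta_taylor_coeff_vanishes
    (d L : ℕ) (hd : 2 ≤ d) (hL : 1 ≤ L) (hdL : ¬ (d ∣ L))
    (u : ℝ) (hu : 0 < u) (lam : ℂ → ℂ) (hlam : AnalyticOnNhd ℂ lam (ball 0 u))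
    (c : ℕ → ℂ) (hc : ∀ w ∈ ball (0:ℂ) u, HasSum (fun n => c n * w ^ n) (lam w))
    (hc0 : c 0 = 0)
    (hcm : ∀ m : ℕ, 1 ≤ m → m < L → ¬ (d ∣ m) → c m = 0)
    (ω : ℂ) (hω : ‖ω‖ = 1)
    (δ : ℝ) (hδ : 0 < δ) (h : ℝ → ℝ)
    (hh : AnalyticOnNhd ℝ h (Ioo (-δ) δ)) (hh0 : h 0 = 0) (hh0' : deriv h 0 = 0)
    (u' : ℝ) (hu'0 : 0 < u') (hu'u : u' ≤ u) (ζ : ℝ → ℝ)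
    (hζ : ∀ t : ℝ, |t| < u' → ζ t = h ((lam (ω * t)).re)) :
    AnalyticAt ℝ ζ 0 ∧ iteratedDeriv L ζ 0 / (Nat.factorial L) = 0 := by
  -- the inner function
  set φ : ℝ → ℝ := fun t => (lam (ω * t)).re with hφdef
  -- its power series coefficients
  set a : ℕ → ℝ := fun n => (c n * ω ^ n).re with hadef
  set P : FormalMultilinearSeries ℝ ℝ ℝ := FormalMultilinearSeries.ofScalars ℝ a with hPdef
  have hPcoeff : ∀ n, P.coeff n = a n := by
    intro n
    have h1 := FormalMultilinearSeries.ofScalars_apply_eq (E := ℝ) a 1 n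
    rw [FormalMultilinearSeries.coeff, hPdef]
    rw [show (1 : Fin n → ℝ) = fun _ => (1:ℝ) from rfl, h1]
    simp
  -- φ has power series P at 0
  have hP : HasFPowerSeriesAt φ P 0 := by
    rw [hasFPowerSeriesAt_iff]
    filter_upwards [Metric.ball_mem_nhds (0:ℝ) hu'0] with t ht
    simp only [Metric.mem_ball, dist_zero_right, Real.norm_eq_abs] at ht
    have hmem : ω * (t:ℂ) ∈ ball (0:ℂ) u := by
      rw [mem_ball_zero_iff, norm_mul, hω, one_mul,
        Complex.norm_real, Real.norm_eq_abs]
      exact lt_of_lt_of_le ht hu'u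
    have h1 := (hc _ hmem)
    have h2 := Complex.reCLM.hasSum h1
    have h3 : ∀ n, Complex.reCLM (c n * (ω * (t:ℂ)) ^ n) = t ^ n • P.coeff n := by
      intro n
      rw [hPcoeff]
      have : c n * (ω * (t:ℂ)) ^ n = ((t:ℂ) ^ n) * (c n * ω ^ n) := by ring
      simp only [Complex.reCLM_apply, this, ← Complex.ofReal_pow,
        Complex.re_ofReal_mul, smul_eq_mul, hadef]
    have h4 : HasSum (fun n => t ^ n • P.coeff n) (φ (0 + t)) := by
      simpa [h3] using h2
    exact h4
  -- λ 0 = 0, hence φ 0 = 0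
  have hlam0 : lam 0 = 0 := by
    have h1 := hc 0 (by simpa using hu)
    have h2 : (fun n => c n * (0:ℂ) ^ n) = fun n => (0:ℂ) := by
      funext n
      cases n with
      | zero => simp [hc0]
      | succ k => simp
    rw [h2] at h1
    exact (h1.unique hasSum_zero)
  have hφ0 : φ 0 = 0 := by simp [hφdef, hlam0]
  -- h has a power series Q at 0
  obtain ⟨Q, hQ⟩ : AnalyticAt ℝ h 0 := hh 0 (by constructor <;> simp [hδ, neg_lt_zero])
  have hQ' : HasFPowerSeriesAt h Q (φ 0) := by rwa [hφ0]
  have hQ1 : Q.coeff 1 = 0 := by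
    have := hQ.deriv
    rw [hh0'] at this
    exact this.symm
  -- ζ has power series Q.comp P at 0
  have hζeq : (h ∘ φ) =ᶠ[nhds (0:ℝ)] ζ := by
    filter_upwards [Metric.ball_mem_nhds (0:ℝ) hu'0] with t ht
    simp only [Metric.mem_ball, dist_zero_right, Real.norm_eq_abs] at ht
    exact (hζ t ht).symm
  have hζP : HasFPowerSeriesAt ζ (Q.comp P) 0 := (hQ'.comp hP).congr hζeq
  refine ⟨hζP.analyticAt, ?_⟩
  -- the L-th coefficient of the composition vanishes
  have hcoeff : (Q.comp P).coeff L = 0 := by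
    rw [FormalMultilinearSeries.coeff, FormalMultilinearSeries.comp,
      ContinuousMultilinearMap.sum_apply]
    apply Finset.sum_eq_zero
    intro b _
    rw [FormalMultilinearSeries.compAlongComposition_apply]
    have happ : P.applyComposition b (1 : Fin L → ℝ) =
        fun i => P.coeff (b.blocksFun i) := by
      funext i
      rfl
    rw [happ, FormalMultilinearSeries.apply_eq_prod_smul_coeff]
    rcases eq_or_lt_of_le (Nat.one_le_iff_ne_zero.mpr
      (Composition.length_pos_of_pos b (Nat.lt_of_lt_of_le Nat.zero_lt_one hL)).ne') with h1 | h2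
    · have hq : Q.coeff b.length = 0 := h1 ▸ hQ1
      rw [hq, smul_zero]
    · -- length ≥ 2 : some block is not divisible by d and is < L, giving coeff 0
      have hblocks : ∑ i, b.blocksFun i = L := b.sum_blocksFun
      have hex : ∃ i, ¬ d ∣ b.blocksFun i := by
        by_contra hall
        push_neg at hall
        exact hdL (hblocks ▸ Finset.dvd_sum fun i _ => hall i)
      obtain ⟨i, hi⟩ := hex
      have hlt : b.blocksFun i < L := by
        have h2' : 2 ≤ b.length := h2
        obtain ⟨j, hj⟩ : ∃ j : Fin b.length, j ≠ i := by
          by_contra hcon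
          push_neg at hcon
          have e0 := hcon ⟨0, by omega⟩
          have e1 := hcon ⟨1, by omega⟩
          rw [← e1] at e0
          exact absurd e0 (by simp [Fin.ext_iff])
        have h5 : b.blocksFun i + b.blocksFun j ≤ ∑ k, b.blocksFun k := by
          rw [← Finset.sum_pair hj.symm]
          exact Finset.sum_le_sum_of_subset (Finset.subset_univ _)
        have h6 := b.one_le_blocksFun j
        omega
      have hzero : P.coeff (b.blocksFun i) = 0 := by
        rw [hPcoeff, hadef]
        simp only
        rw [hcm _ (b.one_le_blocksFun i) hlt hi, zero_mul, Complex.zero_re]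
      rw [Finset.prod_eq_zero (Finset.mem_univ i) hzero, zero_smul]
  -- conclude via the iterated derivative formula
  obtain ⟨r, hr⟩ := hζP
  have hfact := hr.factorial_smul (1:ℝ) L
  rw [iteratedDeriv_eq_iteratedFDeriv, ← hfact,
    FormalMultilinearSeries.apply_eq_pow_smul_coeff, hcoeff]
  simp
end
end

section
/- Every monic polynomial P(z) ∈ 𝒞₀^ω[z] of degree 2 that has roots in the unit circle 𝕋 = {z ∈ ℂ : |z| = 1} is completely reducible. -/
open Metric Polynomial Complex Filter Topology

noncomputable section


lemma quad_vieta (b c : ℂ) : ∃ l m : ℂ,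
    ((X ^ 2 + C b * X + C c : Polynomial ℂ)).roots = {l, m} ∧ b = -(l + m) ∧ c = l * m := by
  set p : Polynomial ℂ := X ^ 2 + C b * X + C c with hp
  have hmon : p.Monic := by
    rw [hp, add_assoc]
    exact monic_X_pow_add (by
      apply lt_of_le_of_lt (degree_add_le _ _)
      have h1 : (C b * X).degree ≤ 1 := by
        simpa using degree_C_mul_X_le b
      have h2 : (C c).degree ≤ 0 := degree_C_le
      refine max_lt (lt_of_le_of_lt h1 ?_) (lt_of_le_of_lt h2 ?_) <;> norm_num)
  have hsp : p.Splits := IsAlgClosed.splits p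
  have hdeg : p.natDegree = 2 := by
    have : p = C 1 * X ^ 2 + C b * X + C c := by simp [hp]
    rw [this]
    exact natDegree_quadratic one_ne_zero
  have hcard : Multiset.card p.roots = 2 := by
    rw [splits_iff_card_roots.mp hsp, hdeg]
  obtain ⟨l, m, hlm⟩ := Multiset.card_eq_two.mp hcard
  refine ⟨l, m, hlm, ?_, ?_⟩
  · have := hsp.eq_prod_roots_of_monic hmon
    rw [hlm] at this
    have h0 : p.eval 0 = c := by simp [hp]
    have h1 : p.eval 1 = 1 + b + c := by simp [hp]
    rw [this] at h0 h1
    simp [Multiset.insert_eq_cons] at h0 h1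
    linear_combination h0 - h1
  · have := hsp.eq_prod_roots_of_monic hmon
    rw [hlm] at this
    have h0 : p.eval 0 = c := by simp [hp]
    rw [this] at h0
    simp [Multiset.insert_eq_cons] at h0
    linear_combination -h0

lemma quad_roots_eq (l m : ℂ) :
    ((X ^ 2 + C (-(l + m)) * X + C (l * m) : Polynomial ℂ)).roots = {l, m} := by
  have key : (X ^ 2 + C (-(l + m)) * X + C (l * m) : Polynomial ℂ)
      = (X - C l) * (X - C m) := by
    simp only [C_neg, C_add, C_mul]; ring
  rw [key, roots_mul (mul_ne_zero (X_sub_C_ne_zero l) (X_sub_C_ne_zero m)),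
    roots_X_sub_C, roots_X_sub_C]
  rfl

lemma circle_disc (l m : ℂ) (hl : ‖l‖ = 1) (hm : ‖m‖ = 1) :
    ∃ cc : ℝ, cc ≤ 0 ∧ (-(l + m)) ^ 2 - 4 * (l * m) = (l * m) * cc := by
  have hl0 : l ≠ 0 := by intro h; rw [h] at hl; simp at hl
  have hm0 : m ≠ 0 := by intro h; rw [h] at hm; simp at hm
  have hnl : Complex.normSq l = 1 := by rw [← Complex.sq_norm, hl]; norm_num
  have hnm : Complex.normSq m = 1 := by rw [← Complex.sq_norm, hm]; norm_num
  have hcl : (starRingEnd ℂ) l = l⁻¹ := by rw [Complex.inv_def, hnl]; simp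
  have hcm : (starRingEnd ℂ) m = m⁻¹ := by rw [Complex.inv_def, hnm]; simp
  refine ⟨-(‖l - m‖)^2, neg_nonpos.mpr (sq_nonneg _), ?_⟩
  have h2 : ((‖l - m‖ : ℂ))^2 = (l - m) * (l⁻¹ - m⁻¹) := by
    rw [← hcl, ← hcm, ← map_sub, Complex.mul_conj']
  push_cast
  rw [h2]
  field_simp
  ring

lemma exists_sqrt (u : ℂ → ℂ) (hu : AnalyticAt ℂ u 0) (hu0 : u 0 ≠ 0) :
    ∃ ε > 0, ∃ q : ℂ → ℂ, AnalyticOnNhd ℂ q (ball 0 ε) ∧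
      ∀ w ∈ ball (0:ℂ) ε, q w ^ 2 = u w := by
  obtain ⟨b, hb⟩ := IsAlgClosed.exists_pow_nat_eq (u 0) (n := 2) two_pos
  have hvcont : ContinuousAt (fun w => u w / u 0) 0 := hu.continuousAt.div continuousAt_const hu0
  have hv1 : (fun w => u w / u 0) 0 = 1 := div_self hu0
  have E2 : ∀ᶠ w in 𝓝 (0:ℂ), u w / u 0 ∈ slitPlane := by
    apply hvcont.eventually_mem
    rw [div_self hu0]
    exact isOpen_slitPlane.mem_nhds one_mem_slitPlane
  have E3 : ∀ᶠ w in 𝓝 (0:ℂ), u w ≠ 0 :=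
    hu.continuousAt.eventually_ne hu0
  have E1 : ∀ᶠ w in 𝓝 (0:ℂ), AnalyticAt ℂ u w := hu.eventually_analyticAt
  obtain ⟨ε, hε, hball⟩ := Metric.eventually_nhds_iff_ball.mp (E1.and (E2.and E3))
  refine ⟨ε, hε, fun w => b * Complex.exp (Complex.log (u w / u 0) / 2), ?_, ?_⟩
  · intro w hw
    obtain ⟨h1, h2, _⟩ := hball w hw
    exact (analyticAt_const).mul ((((h1.div analyticAt_const hu0).clog h2).div analyticAt_const two_ne_zero).cexp)
  · intro w hw
    obtain ⟨_, h2, h3⟩ := hball w hw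
    have hvne : u w / u 0 ≠ 0 := div_ne_zero h3 hu0
    have : Complex.exp (Complex.log (u w / u 0) / 2) ^ 2 = u w / u 0 := by
      rw [sq, ← Complex.exp_add]
      have : Complex.log (u w / u 0) / 2 + Complex.log (u w / u 0) / 2
          = Complex.log (u w / u 0) := by ring
      rw [this, Complex.exp_log hvne]
    rw [mul_pow, this, hb]
    field_simp

lemma order_even (a₀ u : ℂ → ℂ) (m : ℕ) (s : ℝ) (hs : 0 < s)
    (ha₀c : ContinuousAt a₀ 0) (huc : ContinuousAt u 0) (hu0 : u 0 ≠ 0) (ha₀0 : a₀ 0 ≠ 0)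
    (hne : ∀ t : ℝ, |t| < s → a₀ (t:ℂ) ≠ 0)
    (hrel : ∀ t : ℝ, |t| < s → ∃ c : ℝ, c ≤ 0 ∧ ((t:ℂ))^m * u (t:ℂ) = a₀ (t:ℂ) * c) :
    Even m := by
  set φ : ℝ → ℂ := fun t => u (t:ℂ) / a₀ (t:ℂ) with hφdef
  have hoc : ContinuousAt (fun t : ℝ => (t : ℂ)) 0 := Complex.continuous_ofReal.continuousAt
  have huc' : ContinuousAt u ((0:ℝ):ℂ) := by simpa using huc
  have ha₀c' : ContinuousAt a₀ ((0:ℝ):ℂ) := by simpa using ha₀c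
  have ha₀0' : a₀ ((0:ℝ):ℂ) ≠ 0 := by simpa using ha₀0
  have hφc : ContinuousAt φ 0 := ((huc'.comp hoc).div (ha₀c'.comp hoc) ha₀0')
  have hφ0 : φ 0 ≠ 0 := by
    simp only [hφdef]
    exact div_ne_zero (by simpa using hu0) ha₀0'
  have key : ∀ t : ℝ, |t| < s → t ≠ 0 → ∃ c : ℝ, c ≤ 0 ∧ φ t = ((c / t ^ m : ℝ) : ℂ) := by
    intro t ht ht0
    obtain ⟨c, hc, heq⟩ := hrel t ht
    have h1 : ((t:ℂ))^m ≠ 0 := pow_ne_zero _ (by exact_mod_cast ht0)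
    have h2 := hne t ht
    refine ⟨c, hc, ?_⟩
    rw [hφdef]
    push_cast
    rw [div_eq_div_iff h2 h1]
    linear_combination heq
  -- right limit
  have hright : (φ 0).re ≤ 0 ∧ (φ 0).im = 0 := by
    have hS : IsClosed {z : ℂ | z.re ≤ 0 ∧ z.im = 0} :=
      (isClosed_le Complex.continuous_re continuous_const).inter
        (isClosed_eq Complex.continuous_im continuous_const)
    have htd : Filter.Tendsto φ (nhdsWithin 0 (Set.Ioi 0)) (nhds (φ 0)) :=
      hφc.tendsto.mono_left nhdsWithin_le_nhds
    have hev : ∀ᶠ t in nhdsWithin (0:ℝ) (Set.Ioi 0), φ t ∈ {z : ℂ | z.re ≤ 0 ∧ z.im = 0} := by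
      filter_upwards [Ioo_mem_nhdsGT_of_mem (Set.mem_Ico.mpr ⟨le_refl 0, hs⟩)] with t ht
      obtain ⟨c, hc, hφt⟩ := key t (by rw [abs_of_pos ht.1]; exact ht.2) (ne_of_gt ht.1)
      have h3 : c / t ^ m ≤ 0 := div_nonpos_of_nonpos_of_nonneg hc (pow_pos ht.1 m).le
      simp only [hφt, Set.mem_setOf_eq, Complex.ofReal_re, Complex.ofReal_im]
      exact ⟨h3, trivial⟩
    exact hS.mem_of_tendsto htd hev
  rw [← Nat.not_odd_iff_even]
  intro hodd
  have hleft : 0 ≤ (φ 0).re ∧ (φ 0).im = 0 := by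
    have hS : IsClosed {z : ℂ | 0 ≤ z.re ∧ z.im = 0} :=
      (isClosed_le continuous_const Complex.continuous_re).inter
        (isClosed_eq Complex.continuous_im continuous_const)
    have htd : Filter.Tendsto φ (nhdsWithin 0 (Set.Iio 0)) (nhds (φ 0)) :=
      hφc.tendsto.mono_left nhdsWithin_le_nhds
    have hev : ∀ᶠ t in nhdsWithin (0:ℝ) (Set.Iio 0), φ t ∈ {z : ℂ | 0 ≤ z.re ∧ z.im = 0} := by
      filter_upwards [Ioo_mem_nhdsLT_of_mem (show (0:ℝ) ∈ Set.Ioc (-s) 0 from ⟨by linarith, le_refl 0⟩)] with t ht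
      obtain ⟨c, hc, hφt⟩ := key t (by rw [abs_of_neg ht.2]; linarith [ht.1]) (ne_of_lt ht.2)
      have htm : t ^ m < 0 := hodd.pow_neg ht.2
      have h3 : 0 ≤ c / t ^ m := by
        rw [div_nonneg_iff]
        exact Or.inr ⟨hc, htm.le⟩
      simp only [hφt, Set.mem_setOf_eq, Complex.ofReal_re, Complex.ofReal_im]
      exact ⟨h3, trivial⟩
    exact hS.mem_of_tendsto htd hev
  apply hφ0
  apply Complex.ext
  · exact le_antisymm hright.1 hleft.1
  · simpa using hright.2


/-- Every monic degree-2 polynomial `z² + a₁ z + a₀` with coefficients analytic near `0`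
whose roots (for small real parameter values) lie on the unit circle `𝕋` is completely
reducible. -/
theorem degree_two_roots_in_circle_completely_reducible
    (r : ℝ) (hr : 0 < r) (a₀ a₁ : ℂ → ℂ)
    (ha₀ : AnalyticOnNhd ℂ a₀ (ball 0 r)) (ha₁ : AnalyticOnNhd ℂ a₁ (ball 0 r))
    (hroots : ∃ s, 0 < s ∧ s ≤ r ∧ ∀ t : ℝ, |t| < s →
      ∀ z ∈ ((X ^ 2 + C (a₁ (t : ℂ)) * X + C (a₀ (t : ℂ)) : Polynomial ℂ)).roots,
        ‖z‖ = 1) :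
    ∃ u, 0 < u ∧ u ≤ r ∧ ∃ lam₁ lam₂ : ℂ → ℂ,
      AnalyticOnNhd ℂ lam₁ (ball 0 u) ∧ AnalyticOnNhd ℂ lam₂ (ball 0 u) ∧
      ∀ w ∈ ball (0:ℂ) u,
        ((X ^ 2 + C (a₁ w) * X + C (a₀ w) : Polynomial ℂ)).roots = {lam₁ w, lam₂ w} := by
  obtain ⟨s, hs, hsr, hroots⟩ := hroots
  have h0r : (0:ℂ) ∈ ball (0:ℂ) r := by simp [hr]
  have hA₀ : AnalyticAt ℂ a₀ 0 := ha₀ 0 h0r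
  have hA₁ : AnalyticAt ℂ a₁ 0 := ha₁ 0 h0r
  have hD : AnalyticAt ℂ (fun w => (a₁ w)^2 - 4 * a₀ w) 0 :=
    (hA₁.pow 2).sub (analyticAt_const.mul hA₀)
  -- facts on the real axis
  have hfact : ∀ t : ℝ, |t| < s → ‖a₀ (t:ℂ)‖ = 1 ∧
      ∃ c : ℝ, c ≤ 0 ∧ (a₁ (t:ℂ))^2 - 4 * (a₀ (t:ℂ)) = a₀ (t:ℂ) * c := by
    intro t ht
    obtain ⟨l, m, hlm, hb, hc⟩ := quad_vieta (a₁ (t:ℂ)) (a₀ (t:ℂ))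
    have hl1 : ‖l‖ = 1 := hroots t ht l (by rw [hlm]; simp)
    have hm1 : ‖m‖ = 1 := hroots t ht m (by rw [hlm]; simp)
    constructor
    · rw [hc, norm_mul, hl1, hm1, one_mul]
    · obtain ⟨cc, hcc, hid⟩ := circle_disc l m hl1 hm1
      exact ⟨cc, hcc, by rw [hb, hc]; exact hid⟩
  have ha₀0 : a₀ 0 ≠ 0 := by
    have := (hfact 0 (by simpa using hs)).1
    simp only [Complex.ofReal_zero] at this
    intro h; rw [h] at this; simp at this
  have hane : ∀ t : ℝ, |t| < s → a₀ (t:ℂ) ≠ 0 := by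
    intro t ht h
    have := (hfact t ht).1
    rw [h] at this; simp at this
  -- existence of analytic square root of the discriminant
  have hq : ∃ ε, 0 < ε ∧ ∃ q : ℂ → ℂ, AnalyticOnNhd ℂ q (ball 0 ε) ∧
      ∀ w ∈ ball (0:ℂ) ε, q w ^ 2 = (a₁ w)^2 - 4 * a₀ w := by
    rcases eq_or_ne (analyticOrderAt (fun w => (a₁ w)^2 - 4 * a₀ w) 0) ⊤ with htop | hne
    · obtain ⟨ε, hε, hball⟩ :=
        Metric.eventually_nhds_iff_ball.mp (analyticOrderAt_eq_top.mp htop)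
      exact ⟨ε, hε, 0, fun w _ => analyticAt_const,
        fun w hw => by simpa using (hball w hw).symm⟩
    · obtain ⟨m, hm⟩ := WithTop.ne_top_iff_exists.mp hne
      obtain ⟨g, hg, hg0, hev⟩ := (hD.analyticOrderAt_eq_natCast (n := m)).mp hm.symm
      simp only [sub_zero, smul_eq_mul] at hev
      obtain ⟨ε₁, hε₁, hball₁⟩ := Metric.eventually_nhds_iff_ball.mp hev
      set s' := min s ε₁ with hs'
      have hs'pos : 0 < s' := lt_min hs hε₁
      have heven : Even m := by
        apply order_even a₀ g m s' hs'pos hA₀.continuousAt hg.continuousAt hg0 ha₀0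
        · intro t ht; exact hane t (lt_of_lt_of_le ht (min_le_left _ _))
        · intro t ht
          obtain ⟨_, c, hc, hid⟩ := hfact t (lt_of_lt_of_le ht (min_le_left _ _))
          have htb : (t:ℂ) ∈ ball (0:ℂ) ε₁ := by
            rw [mem_ball_zero_iff]
            simpa using lt_of_lt_of_le ht (min_le_right _ _)
          refine ⟨c, hc, ?_⟩
          rw [← hball₁ _ htb]
          exact hid
      obtain ⟨k, hk⟩ := heven
      obtain ⟨ε₂, hε₂, q₀, hq₀A, hq₀sq⟩ := exists_sqrt g hg hg0
      refine ⟨min ε₁ ε₂, lt_min hε₁ hε₂, fun w => w ^ k * q₀ w, ?_, ?_⟩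
      · intro w hw
        exact ((analyticAt_id.pow k).mul
          (hq₀A w (Set.mem_of_mem_of_subset hw (ball_subset_ball (min_le_right _ _)))))
      · intro w hw
        have hw₁ : w ∈ ball (0:ℂ) ε₁ :=
          Set.mem_of_mem_of_subset hw (ball_subset_ball (min_le_left _ _))
        have hw₂ : w ∈ ball (0:ℂ) ε₂ :=
          Set.mem_of_mem_of_subset hw (ball_subset_ball (min_le_right _ _))
        rw [mul_pow, hq₀sq w hw₂, hball₁ w hw₁, hk, pow_add]
        ring
  obtain ⟨ε, hε, q, hqA, hqsq⟩ := hq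
  refine ⟨min ε r, lt_min hε hr, min_le_right _ _,
    fun w => (-(a₁ w) + q w) / 2, fun w => (-(a₁ w) - q w) / 2, ?_, ?_, ?_⟩
  · intro w hw
    have hwε : w ∈ ball (0:ℂ) ε := Set.mem_of_mem_of_subset hw (ball_subset_ball (min_le_left _ _))
    have hwr : w ∈ ball (0:ℂ) r := Set.mem_of_mem_of_subset hw (ball_subset_ball (min_le_right _ _))
    exact (((ha₁ w hwr).neg.add (hqA w hwε)).div analyticAt_const two_ne_zero)
  · intro w hw
    have hwε : w ∈ ball (0:ℂ) ε := Set.mem_of_mem_of_subset hw (ball_subset_ball (min_le_left _ _))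
    have hwr : w ∈ ball (0:ℂ) r := Set.mem_of_mem_of_subset hw (ball_subset_ball (min_le_right _ _))
    exact (((ha₁ w hwr).neg.sub (hqA w hwε)).div analyticAt_const two_ne_zero)
  · intro w hw
    have hwε : w ∈ ball (0:ℂ) ε := Set.mem_of_mem_of_subset hw (ball_subset_ball (min_le_left _ _))
    have hq2 := hqsq w hwε
    set l₁ := (-(a₁ w) + q w) / 2 with hl₁
    set l₂ := (-(a₁ w) - q w) / 2 with hl₂
    have hb' : a₁ w = -(l₁ + l₂) := by rw [hl₁, hl₂]; ring
    have hc' : a₀ w = l₁ * l₂ := by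
      rw [hl₁, hl₂]
      have h4 : ((-a₁ w + q w)/2) * ((-a₁ w - q w)/2) = (a₁ w ^ 2 - q w ^ 2)/4 := by ring
      rw [h4, hq2]; ring
    rw [hb', hc']
    exact quad_roots_eq l₁ l₂
end
end
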